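/- Let P ∈ ℝ^{n×n} be symmetric negative definite, U ∈ ℝ^{m×m} symmetric positive definite and block-diagonal U = diag(U₁₁, U₂₂), and W ∈ ℝ^{n×m} of block form W = [[W₁₁, 0],[0, 0]] with W₁₁ an r×r nonsingular block (matching the block structure of U). Then −WᵀP⁻¹W − U⁻¹ is negative semidefinite if and only if P + W U Wᵀ is negative semidefinite. -/

import Mathlib

open Matrix

/-- Lemma 5 (block matrix equivalence): with `P ≺ 0` symmetric, `U ≻ 0` symmetric block
diagonal, and `W = [[W₁₁,0],[0,0]]` with `W₁₁` nonsingular (matching the block structure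
of `U`), the matrix `−Wᵀ P⁻¹ W − U⁻¹` is negative semidefinite if and only if
`P + W U Wᵀ` is negative semidefinite.  (A matrix `M` is negative (semi)definite iff
`-M` is positive (semi)definite.) -/
theorem block_negSemidef_iff (r s t : ℕ)
    (P : Matrix (Fin r ⊕ Fin s) (Fin r ⊕ Fin s) ℝ)
    (U₁₁ : Matrix (Fin r) (Fin r) ℝ) (U₂₂ : Matrix (Fin t) (Fin t) ℝ)
    (W₁₁ : Matrix (Fin r) (Fin r) ℝ)
    (U : Matrix (Fin r ⊕ Fin t) (Fin r ⊕ Fin t) ℝ)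
    (W : Matrix (Fin r ⊕ Fin s) (Fin r ⊕ Fin t) ℝ)
    (hU : U = Matrix.fromBlocks U₁₁ 0 0 U₂₂)
    (hW : W = Matrix.fromBlocks W₁₁ 0 0 0)
    (hP : P.IsHermitian) (hPneg : (-P).PosDef)
    (hUpos : U.PosDef) (hW₁₁ : IsUnit W₁₁) :
    (-(-(Wᵀ * P⁻¹ * W) - U⁻¹)).PosSemidef ↔ (-(P + W * U * Wᵀ)).PosSemidef := by
  have hPunit : IsUnit P.det := by
    have h := hPneg.isUnit
    rw [isUnit_iff_isUnit_det, Matrix.det_neg] at h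
    exact (IsUnit.mul_iff.mp h).2
  have hinvneg : (-P)⁻¹ = -P⁻¹ := by
    apply Matrix.inv_eq_right_inv
    rw [neg_mul_neg, Matrix.mul_nonsing_inv _ hPunit]
  have hUinv : (U⁻¹).PosDef := hUpos.inv
  haveI : Invertible (-P) := hPneg.isUnit.invertible
  haveI : Invertible (U⁻¹) := hUinv.isUnit.invertible
  have h1 := Matrix.PosDef.fromBlocks₁₁ (R' := ℝ) W U⁻¹ hPneg
  have h2 := Matrix.PosDef.fromBlocks₂₂ (R' := ℝ) (-P) W hUinv
  have hWH : Wᴴ = Wᵀ := Matrix.conjTranspose_eq_transpose_of_trivial W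
  rw [hWH] at h1 h2
  have e1 : U⁻¹ - Wᵀ * (-P)⁻¹ * W = -(-(Wᵀ * P⁻¹ * W) - U⁻¹) := by
    rw [hinvneg, Matrix.mul_neg, Matrix.neg_mul, sub_neg_eq_add]
    abel
  have e2 : -P - W * (U⁻¹)⁻¹ * Wᵀ = -(P + W * U * Wᵀ) := by
    rw [Matrix.nonsing_inv_nonsing_inv _ (isUnit_iff_isUnit_det U |>.mp hUpos.isUnit)]
    abel
  rw [e1] at h1
  rw [e2] at h2
  rw [← h1, ← h2]
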